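/- Proximal three-point inequality: let g : E → (−∞, ∞] be proper closed convex and φ convex and differentiable at the relevant points. For y with φ differentiable at y, ε > 0, define P(x) := g(x) + ε·D_φ(x, y). If x̄ minimizes P over E and φ is differentiable at x̄, then for every u ∈ dom g ∩ dom φ, P(u) − P(x̄) ≥ ε·D_φ(u, x̄). -/

import Mathlib

open RealInnerProductSpace

noncomputable def bregman {E : Type*} [NormedAddCommGroup E] [InnerProductSpace ℝ E]
    [FiniteDimensional ℝ E] (φ : E → ℝ) (x y : E) : ℝ :=
  φ x - φ y - ⟪gradient φ y, x - y⟫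

theorem prox_three_point_inequality {E : Type*} [NormedAddCommGroup E] [InnerProductSpace ℝ E]
    [FiniteDimensional ℝ E] (g φ : E → ℝ) (S T : Set E)
    (hg : ConvexOn ℝ S g) (hφ : ConvexOn ℝ T φ)
    (y : E) (hy : y ∈ interior T) (hyd : DifferentiableAt ℝ φ y)
    (ε : ℝ) (hε : 0 < ε) (xbar : E) (hxbar : xbar ∈ S ∩ T)
    (hxd : DifferentiableAt ℝ φ xbar)
    (hmin : ∀ x ∈ S ∩ T, g xbar + ε * bregman φ xbar y ≤ g x + ε * bregman φ x y) :
    ∀ u ∈ S ∩ T,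
      (g u + ε * bregman φ u y) - (g xbar + ε * bregman φ xbar y) ≥
        ε * bregman φ u xbar := by
  intro u hu
  set v : E := u - xbar with hv
  set c : ℝ := ⟪gradient φ y, v⟫ with hc
  -- derivative of the line
  have hline : HasDerivAt (fun s : ℝ => xbar + s • v) v 0 := by
    have h1 : HasDerivAt (fun s : ℝ => s • v) ((1:ℝ) • v) 0 :=
      (hasDerivAt_id 0).smul_const v
    simpa using h1.const_add xbar
  have hF : HasFDerivAt φ ((InnerProductSpace.toDual ℝ E) (gradient φ xbar)) xbar :=
    hxd.hasGradientAt.hasFDerivAt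
  have hcomp : HasDerivAt (fun t : ℝ => φ (xbar + t • v)) ⟪gradient φ xbar, v⟫ 0 := by
    have h2 : HasFDerivAt φ ((InnerProductSpace.toDual ℝ E) (gradient φ xbar))
        (xbar + (0:ℝ) • v) := by simpa using hF
    have := h2.comp_hasDerivAt 0 hline
    simpa [InnerProductSpace.toDual_apply_apply, Function.comp_def] using this
  have hslope : Filter.Tendsto (slope (fun t : ℝ => φ (xbar + t • v)) 0)
      (nhdsWithin 0 (Set.Ioi 0)) (nhds ⟪gradient φ xbar, v⟫) := by
    have := hasDerivAt_iff_tendsto_slope.mp hcomp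
    exact this.mono_left (nhdsWithin_mono _ (fun x hx => ne_of_gt hx))
  -- the quotient function
  set q : ℝ → ℝ := fun t =>
    (g u - g xbar) + ε * (slope (fun t : ℝ => φ (xbar + t • v)) 0 t - c) with hq
  have hqtend : Filter.Tendsto q (nhdsWithin 0 (Set.Ioi 0))
      (nhds ((g u - g xbar) + ε * (⟪gradient φ xbar, v⟫ - c))) := by
    exact (((hslope.sub_const c).const_mul ε).const_add (g u - g xbar))
  have hqnonneg : ∀ᶠ t in nhdsWithin 0 (Set.Ioi 0), 0 ≤ q t := by
    filter_upwards [Ioo_mem_nhdsGT (by norm_num : (0:ℝ) < 1)] with t ht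
    obtain ⟨ht0, ht1⟩ := ht
    have hcomb : xbar + t • v = (1 - t) • xbar + t • u := by
      simp [hv, smul_sub]; module
    have hmemS : xbar + t • v ∈ S := by
      rw [hcomb]
      exact hg.1 hxbar.1 hu.1 (by linarith) ht0.le (by ring)
    have hmemT : xbar + t • v ∈ T := by
      rw [hcomb]
      exact hφ.1 hxbar.2 hu.2 (by linarith) ht0.le (by ring)
    have hA := hmin _ ⟨hmemS, hmemT⟩
    have hB : g (xbar + t • v) ≤ (1 - t) * g xbar + t * g u := by
      rw [hcomb]
      exact hg.2 hxbar.1 hu.1 (by linarith) ht0.le (by ring)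
    have hinner : ⟪gradient φ y, (xbar + t • v) - y⟫
        = ⟪gradient φ y, xbar - y⟫ + t * c := by
      have : (xbar + t • v) - y = (xbar - y) + t • v := by abel
      rw [this, inner_add_right, real_inner_smul_right]
    have key : 0 ≤ t * (g u - g xbar) + ε * (φ (xbar + t • v) - φ xbar - t * c) := by
      simp only [bregman, hinner] at hA
      nlinarith [hA, hB]
    have hqval : q t = (t * (g u - g xbar)
        + ε * (φ (xbar + t • v) - φ xbar - t * c)) / t := by
      simp only [hq, slope_def_field, div_sub_div_same]
      field_simp
      simp only [zero_smul, add_zero]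
      ring
    rw [hqval]
    exact div_nonneg key ht0.le
  have hL : 0 ≤ (g u - g xbar) + ε * (⟪gradient φ xbar, v⟫ - c) :=
    ge_of_tendsto hqtend hqnonneg
  simp only [bregman, hv, hc] at hL ⊢
  have e1 : ⟪gradient φ y, u - y⟫ - ⟪gradient φ y, xbar - y⟫ = ⟪gradient φ y, u - xbar⟫ := by
    rw [← inner_sub_right]; congr 1; abel
  nlinarith [hL, e1]
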